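/- (Painlevé V similarity ansatz for the H1 reduced system.) Fix integers n, m and μ ∈ ℝ. Let I ⊆ ℝ be an open interval with 0 ∉ I, let T, T1, T2 be twice differentiable real functions on I, and set D := {(α,β) ∈ ℝ² : α − β ∈ I}. Define u(α,β) := T(α−β)·exp(μ(α+β)), u1(α,β) := T1(α−β)·exp(−μ(α+β)), u2(α,β) := T2(α−β)·exp(−μ(α+β)). Then (u, u1, u2) satisfies the H1 reduced system Σ_H1(n,m) on D if and only if (T, T1, T2) satisfies the reduced ODE system (sysH1redP5) on I. -/

import Mathlib

/-- Partial derivative with respect to the first variable. -/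
noncomputable def pda (f : ℝ × ℝ → ℝ) (p : ℝ × ℝ) : ℝ :=
  deriv (fun x => f (x, p.2)) p.1

/-- Partial derivative with respect to the second variable. -/
noncomputable def pdb (f : ℝ × ℝ → ℝ) (p : ℝ × ℝ) : ℝ :=
  deriv (fun y => f (p.1, y)) p.2

/-- The H1 reduced system Σ_H1(n,m). -/
def SigmaH1 (n m : ℤ) (u u1 u2 : ℝ × ℝ → ℝ) (p : ℝ × ℝ) : Prop :=
  pdb u1 p = ((u1 p - u2 p) / (p.1 - p.2)) * ((m : ℝ) - (u1 p - u2 p) * pdb u p) ∧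
  pda u2 p = ((u1 p - u2 p) / (p.1 - p.2)) * ((n : ℝ) + (u1 p - u2 p) * pda u p) ∧
  pdb (pda u) p = (1 / (p.1 - p.2)) *
    (2 * (u1 p - u2 p) * pda u p * pdb u p + (n : ℝ) * pdb u p - (m : ℝ) * pda u p)

/-- The reduced ODE system (sysH1redP5). -/
def sysH1redP5 (n m : ℤ) (μ : ℝ) (T T1 T2 : ℝ → ℝ) (y : ℝ) : Prop :=
  y * (deriv T1 y + μ * T1 y) =
      -(((m : ℝ) + (deriv T y - μ * T y) * (T1 y - T2 y)) * (T1 y - T2 y)) ∧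
  y * (deriv T2 y - μ * T2 y) =
      ((n : ℝ) + (deriv T y + μ * T y) * (T1 y - T2 y)) * (T1 y - T2 y) ∧
  y * deriv (deriv T) y - ((n : ℝ) + (m : ℝ)) * deriv T y =
      2 * (deriv T y + μ * T y) * (deriv T y - μ * T y) * (T1 y - T2 y)
        - ((n : ℝ) - (m : ℝ) - μ * y) * μ * T y

/-- Similarity-type derivative: `t ↦ f (t - c) · exp (ν (t + c))`. -/
lemma hasDerivAt_similarity_a (f : ℝ → ℝ) (f' ν c x : ℝ) (hf : HasDerivAt f f' (x - c)) :
    HasDerivAt (fun t => f (t - c) * Real.exp (ν * (t + c)))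
      ((f' + ν * f (x - c)) * Real.exp (ν * (x + c))) x := by
  have h1 : HasDerivAt (fun t => f (t - c)) f' x := by
    exact hf.comp_sub_const x c
  have h2 : HasDerivAt (fun t => Real.exp (ν * (t + c)))
      (Real.exp (ν * (x + c)) * ν) x := by
    have hin : HasDerivAt (fun t : ℝ => ν * (t + c)) ν x := by
      simpa using ((hasDerivAt_id x).add_const c).const_mul ν
    exact (Real.hasDerivAt_exp (ν * (x + c))).comp x hin
  have := h1.mul h2
  convert this using 1 <;> first | rfl | ring

/-- Similarity-type derivative: `t ↦ f (c - t) · exp (ν (c + t))`. -/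
lemma hasDerivAt_similarity_b (f : ℝ → ℝ) (f' ν c x : ℝ) (hf : HasDerivAt f f' (c - x)) :
    HasDerivAt (fun t => f (c - t) * Real.exp (ν * (c + t)))
      ((-f' + ν * f (c - x)) * Real.exp (ν * (c + x))) x := by
  have h1 : HasDerivAt (fun t => f (c - t)) (-f') x := by
    exact hf.comp_const_sub c x
  have h2 : HasDerivAt (fun t => Real.exp (ν * (c + t)))
      (Real.exp (ν * (c + x)) * ν) x := by
    have hin : HasDerivAt (fun t : ℝ => ν * (c + t)) ν x := by
      simpa using ((hasDerivAt_id x).const_add c).const_mul ν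
    exact (Real.hasDerivAt_exp (ν * (c + x))).comp x hin
  have := h1.mul h2
  convert this using 1 <;> first | rfl | ring

/-- Painlevé V similarity ansatz for the H1 reduced system. -/
theorem similarity_ansatz_PV_H1
    (n m : ℤ) (μ : ℝ) (I : Set ℝ) (hI : IsOpen I) (hIc : I.OrdConnected)
    (h0 : (0 : ℝ) ∉ I) (T T1 T2 : ℝ → ℝ)
    (hT : ContDiffOn ℝ 2 T I) (hT1 : ContDiffOn ℝ 2 T1 I) (hT2 : ContDiffOn ℝ 2 T2 I) :
    (∀ p : ℝ × ℝ, p.1 - p.2 ∈ I →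
      SigmaH1 n m
        (fun q => T (q.1 - q.2) * Real.exp (μ * (q.1 + q.2)))
        (fun q => T1 (q.1 - q.2) * Real.exp (-(μ * (q.1 + q.2))))
        (fun q => T2 (q.1 - q.2) * Real.exp (-(μ * (q.1 + q.2)))) p) ↔
    (∀ y ∈ I, sysH1redP5 n m μ T T1 T2 y) := by
  have hTd : ∀ y ∈ I, HasDerivAt T (deriv T y) y := fun y hy =>
    ((hT.contDiffAt (hI.mem_nhds hy)).differentiableAt (by norm_num)).hasDerivAt
  have hT1d : ∀ y ∈ I, HasDerivAt T1 (deriv T1 y) y := fun y hy =>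
    ((hT1.contDiffAt (hI.mem_nhds hy)).differentiableAt (by norm_num)).hasDerivAt
  have hT2d : ∀ y ∈ I, HasDerivAt T2 (deriv T2 y) y := fun y hy =>
    ((hT2.contDiffAt (hI.mem_nhds hy)).differentiableAt (by norm_num)).hasDerivAt
  have hT'c : ContDiffOn ℝ 1 (deriv T) I := hT.deriv_of_isOpen (m := 1) hI (by norm_num)
  have hT'd : ∀ y ∈ I, HasDerivAt (deriv T) (deriv (deriv T) y) y := fun y hy =>
    ((hT'c.contDiffAt (hI.mem_nhds hy)).differentiableAt (by norm_num)).hasDerivAt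
  -- partial derivatives of the ansatz functions
  have hpda_u : ∀ q : ℝ × ℝ, q.1 - q.2 ∈ I →
      pda (fun q : ℝ × ℝ => T (q.1 - q.2) * Real.exp (μ * (q.1 + q.2))) q
        = (deriv T (q.1 - q.2) + μ * T (q.1 - q.2)) * Real.exp (μ * (q.1 + q.2)) := by
    intro q hq
    exact (hasDerivAt_similarity_a T (deriv T (q.1 - q.2)) μ q.2 q.1 (hTd _ hq)).deriv
  have hpdb_u : ∀ q : ℝ × ℝ, q.1 - q.2 ∈ I →
      pdb (fun q : ℝ × ℝ => T (q.1 - q.2) * Real.exp (μ * (q.1 + q.2))) q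
        = (-deriv T (q.1 - q.2) + μ * T (q.1 - q.2)) * Real.exp (μ * (q.1 + q.2)) := by
    intro q hq
    exact (hasDerivAt_similarity_b T (deriv T (q.1 - q.2)) μ q.1 q.2 (hTd _ hq)).deriv
  have hpdb_u1 : ∀ q : ℝ × ℝ, q.1 - q.2 ∈ I →
      pdb (fun q : ℝ × ℝ => T1 (q.1 - q.2) * Real.exp (-(μ * (q.1 + q.2)))) q
        = (-deriv T1 (q.1 - q.2) + -μ * T1 (q.1 - q.2)) * Real.exp (-(μ * (q.1 + q.2))) := by
    intro q hq
    have := (hasDerivAt_similarity_b T1 (deriv T1 (q.1 - q.2)) (-μ) q.1 q.2 (hT1d _ hq)).deriv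
    simpa [neg_mul, pdb, pda] using this
  have hpda_u2 : ∀ q : ℝ × ℝ, q.1 - q.2 ∈ I →
      pda (fun q : ℝ × ℝ => T2 (q.1 - q.2) * Real.exp (-(μ * (q.1 + q.2)))) q
        = (deriv T2 (q.1 - q.2) + -μ * T2 (q.1 - q.2)) * Real.exp (-(μ * (q.1 + q.2))) := by
    intro q hq
    have := (hasDerivAt_similarity_a T2 (deriv T2 (q.1 - q.2)) (-μ) q.2 q.1 (hT2d _ hq)).deriv
    simpa [neg_mul, pdb, pda] using this
  have hpdb_pda_u : ∀ p : ℝ × ℝ, p.1 - p.2 ∈ I →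
      pdb (pda (fun q : ℝ × ℝ => T (q.1 - q.2) * Real.exp (μ * (q.1 + q.2)))) p
        = (-(deriv (deriv T) (p.1 - p.2) + μ * deriv T (p.1 - p.2))
            + μ * (deriv T (p.1 - p.2) + μ * T (p.1 - p.2)))
            * Real.exp (μ * (p.1 + p.2)) := by
    intro p hp
    have hopen : IsOpen {b : ℝ | p.1 - b ∈ I} := hI.preimage (by continuity)
    have hev : (fun b => pda (fun q : ℝ × ℝ =>
          T (q.1 - q.2) * Real.exp (μ * (q.1 + q.2))) (p.1, b))
        =ᶠ[nhds p.2]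
          fun b => (deriv T (p.1 - b) + μ * T (p.1 - b)) * Real.exp (μ * (p.1 + b)) := by
      filter_upwards [hopen.mem_nhds hp] with b hb
      exact hpda_u (p.1, b) hb
    have hder : HasDerivAt
        (fun b => (deriv T (p.1 - b) + μ * T (p.1 - b)) * Real.exp (μ * (p.1 + b)))
        ((-(deriv (deriv T) (p.1 - p.2) + μ * deriv T (p.1 - p.2))
          + μ * (deriv T (p.1 - p.2) + μ * T (p.1 - p.2)))
          * Real.exp (μ * (p.1 + p.2))) p.2 :=
      hasDerivAt_similarity_b (fun z => deriv T z + μ * T z)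
        (deriv (deriv T) (p.1 - p.2) + μ * deriv T (p.1 - p.2)) μ p.1 p.2
        ((hT'd _ hp).add ((hTd _ hp).const_mul μ))
    show deriv _ p.2 = _
    rw [hev.deriv_eq]
    exact hder.deriv
  -- the key pointwise equivalence
  have key : ∀ p : ℝ × ℝ, p.1 - p.2 ∈ I →
      (SigmaH1 n m
        (fun q => T (q.1 - q.2) * Real.exp (μ * (q.1 + q.2)))
        (fun q => T1 (q.1 - q.2) * Real.exp (-(μ * (q.1 + q.2))))
        (fun q => T2 (q.1 - q.2) * Real.exp (-(μ * (q.1 + q.2)))) p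
        ↔ sysH1redP5 n m μ T T1 T2 (p.1 - p.2)) := by
    intro p hp
    have hy : p.1 - p.2 ≠ 0 := fun h => h0 (h ▸ hp)
    have hE : Real.exp (μ * (p.1 + p.2)) ≠ 0 := Real.exp_ne_zero _
    unfold SigmaH1 sysH1redP5
    rw [hpdb_u1 p hp, hpda_u2 p hp, hpda_u p hp, hpdb_u p hp, hpdb_pda_u p hp]
    simp only [Real.exp_neg]
    constructor
    · rintro ⟨h1, h2, h3⟩
      refine ⟨?_, ?_, ?_⟩
      · field_simp at h1
        refine mul_left_cancel₀ (pow_ne_zero 2 hE) ?_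
        linear_combination -(Real.exp (μ * (p.1 + p.2)))^2 * h1
      · field_simp at h2
        refine mul_left_cancel₀ (pow_ne_zero 2 hE) ?_
        linear_combination (Real.exp (μ * (p.1 + p.2)))^2 * h2
      · field_simp at h3
        refine mul_left_cancel₀ (pow_ne_zero 2 hE) ?_
        linear_combination -(Real.exp (μ * (p.1 + p.2)))^2 * h3
    · rintro ⟨h1, h2, h3⟩
      refine ⟨?_, ?_, ?_⟩
      · field_simp
        linear_combination -h1
      · field_simp
        linear_combination h2
      · field_simp
        linear_combination -h3
  constructor
  · intro h y hy
    have h2 := (key (y, 0) (by simpa)).mp (h (y, 0) (by simpa))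
    simpa using h2
  · intro h p hp
    exact (key p hp).mpr (h _ hp)
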